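/- arXiv:1710.04898 — 3 statements merged into one kernel-verified Lean document; each statement's English description precedes it below -/
import Mathlib

section
/- Let 0 < c < 1 and set ε = c^{1/d}. Then a matrix A ∈ M_{m×n}(ℝ) belongs to Bad_{i,j}(c) if and only if for every t ≥ 0 and every nonzero v ∈ ℤ^d one has ‖g_t u_A v‖_{i,j} ≥ ε; equivalently, δ_{i,j}(g_t u_A) ≥ ε for all t ≥ 0. -/
open Matrix

/-- The weighted quasinorm `‖x‖_w = max_k |x_k|^(1/w_k)`. -/
noncomputable def wnorm {k : ℕ} (w : Fin k → ℝ) (x : Fin k → ℝ) : ℝ :=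
  ⨆ l, |x l| ^ (1 / w l)

/-- The `(i,j)`-quasinorm of `v = (p, q) ∈ ℝ^m × ℝ^n`:
`‖v‖_{i,j} = max(‖p‖_i^(1/m), ‖q‖_j^(1/n))`. -/
noncomputable def wnormIJ (m n : ℕ) (wi : Fin m → ℝ) (wj : Fin n → ℝ)
    (v : Fin m ⊕ Fin n → ℝ) : ℝ :=
  max ((wnorm wi (fun k => v (Sum.inl k))) ^ (1 / (m : ℝ)))
      ((wnorm wj (fun l => v (Sum.inr l))) ^ (1 / (n : ℝ)))

/-- The set of `(i,j)`-badly approximable systems of linear forms with constant `c`. -/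
def Bad (m n : ℕ) (wi : Fin m → ℝ) (wj : Fin n → ℝ) (c : ℝ) :
    Set (Fin m → Fin n → ℝ) :=
  {A | ∀ (p : Fin m → ℤ) (q : Fin n → ℤ), q ≠ 0 →
    wnorm wi (fun k => (∑ l, A k l * (q l : ℝ)) + (p k : ℝ)) *
      wnorm wj (fun l => (q l : ℝ)) ≥ c}

/-- The diagonal one-parameter subgroup
`g_t = diag(e^{i₁ t}, …, e^{i_m t}, e^{−j₁ t}, …, e^{−j_n t})`. -/
noncomputable def gMat (m n : ℕ) (wi : Fin m → ℝ) (wj : Fin n → ℝ) (t : ℝ) :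
    Matrix (Fin m ⊕ Fin n) (Fin m ⊕ Fin n) ℝ :=
  Matrix.diagonal (Sum.elim (fun k => Real.exp (wi k * t)) (fun l => Real.exp (-(wj l) * t)))

/-- The unipotent matrix `u_A = [[I_m, A], [0, I_n]]`. -/
def uMat (m n : ℕ) (A : Fin m → Fin n → ℝ) :
    Matrix (Fin m ⊕ Fin n) (Fin m ⊕ Fin n) ℝ :=
  Matrix.fromBlocks 1 (Matrix.of A) 0 1

lemma wnorm_nonneg {k : ℕ} (w x : Fin k → ℝ) : 0 ≤ wnorm w x :=
  Real.iSup_nonneg fun _ => Real.rpow_nonneg (abs_nonneg _) _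

lemma wnorm_exp_smul {k : ℕ} (w : Fin k → ℝ) (hw : ∀ i, 0 < w i) (t : ℝ) (x : Fin k → ℝ) :
    wnorm w (fun i => Real.exp (w i * t) * x i) = Real.exp t * wnorm w x := by
  unfold wnorm
  rw [Real.mul_iSup_of_nonneg (Real.exp_nonneg t)]
  congr 1; funext i
  rw [abs_mul, abs_of_pos (Real.exp_pos _),
    Real.mul_rpow (Real.exp_nonneg _) (abs_nonneg _), ← Real.exp_mul]
  congr 2
  rw [mul_one_div]
  exact mul_div_cancel_left₀ t (hw i).ne'

lemma one_le_wnorm_int {k : ℕ} (w : Fin k → ℝ) (hw : ∀ i, 0 < w i)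
    (v : Fin k → ℤ) (hv : v ≠ 0) : 1 ≤ wnorm w (fun i => (v i : ℝ)) := by
  obtain ⟨i, hi⟩ : ∃ i, v i ≠ 0 := by
    by_contra h; push_neg at h; exact hv (funext h)
  have h1 : (1 : ℝ) ≤ |(v i : ℝ)| := by
    rw [← Int.cast_abs]; exact_mod_cast Int.one_le_abs hi
  calc (1:ℝ) ≤ |(v i : ℝ)| ^ (1 / w i) :=
        Real.one_le_rpow h1 (one_div_pos.mpr (hw i)).le
    _ ≤ wnorm w (fun i => (v i : ℝ)) := by
        exact le_ciSup (Set.Finite.bddAbove (Set.finite_range (fun i => |(v i : ℝ)| ^ (1 / w i)))) i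

lemma mulVec_eq (m n : ℕ) (wi : Fin m → ℝ) (wj : Fin n → ℝ) (A : Fin m → Fin n → ℝ)
    (t : ℝ) (v : Fin m ⊕ Fin n → ℤ) :
    (gMat m n wi wj t * uMat m n A).mulVec (fun x => (v x : ℝ)) =
    Sum.elim
      (fun k => Real.exp (wi k * t) *
        ((∑ l, A k l * (v (Sum.inr l) : ℝ)) + (v (Sum.inl k) : ℝ)))
      (fun l => Real.exp (wj l * (-t)) * (v (Sum.inr l) : ℝ)) := by
  rw [← Matrix.mulVec_mulVec]
  funext x
  cases x with
  | inl k =>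
    simp [gMat, uMat, Matrix.mulVec, dotProduct, Fintype.sum_sum_type,
      Matrix.fromBlocks_apply₁₁, Matrix.fromBlocks_apply₁₂, Matrix.one_apply,
      Matrix.diagonal_apply, Finset.sum_ite_eq, Finset.sum_ite_eq',
      Finset.mul_sum, add_comm, mul_comm]
  | inr l =>
    simp [gMat, uMat, Matrix.mulVec, dotProduct, Fintype.sum_sum_type,
      Matrix.fromBlocks_apply₂₁, Matrix.fromBlocks_apply₂₂, Matrix.one_apply,
      Matrix.diagonal_apply, Finset.sum_ite_eq, Finset.sum_ite_eq']

/-- Dani-type correspondence with weights: for `0 < c < 1` and `ε = c^{1/d}`,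
`A ∈ Bad_{i,j}(c)` if and only if `‖g_t u_A v‖_{i,j} ≥ ε` for every `t ≥ 0` and every
nonzero integer vector `v ∈ ℤ^d`. -/
theorem bad_iff_orbit_avoids_cusp (m n : ℕ) (hm : 0 < m) (hn : 0 < n)
    (wi : Fin m → ℝ) (wj : Fin n → ℝ)
    (hwi : ∀ k, 0 < wi k) (hwj : ∀ l, 0 < wj l)
    (hsi : ∑ k, wi k = 1) (hsj : ∑ l, wj l = 1)
    (c : ℝ) (hc0 : 0 < c) (hc1 : c < 1)
    (A : Fin m → Fin n → ℝ) :
    A ∈ Bad m n wi wj c ↔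
      ∀ t : ℝ, 0 ≤ t → ∀ v : Fin m ⊕ Fin n → ℤ, v ≠ 0 →
        wnormIJ m n wi wj
            ((gMat m n wi wj t * uMat m n A).mulVec (fun x => (v x : ℝ)))
          ≥ c ^ (1 / (m + n : ℝ)) := by
  set ε : ℝ := c ^ (1 / (m + n : ℝ)) with hεdef
  have hd0 : m + n ≠ 0 := by omega
  have hcastd : (1 / (m + n : ℝ)) = (((m + n : ℕ) : ℝ))⁻¹ := by
    rw [one_div]; push_cast; ring
  have hε0 : 0 < ε := Real.rpow_pos_of_pos hc0 _
  have hε1 : ε < 1 := Real.rpow_lt_one hc0.le hc1 (by positivity)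
  have hεpow : ε ^ m * ε ^ n = c := by
    rw [← pow_add, hεdef, hcastd]
    exact Real.rpow_inv_natCast_pow hc0.le hd0
  -- the norm formula
  have hnorm : ∀ (t : ℝ) (v : Fin m ⊕ Fin n → ℤ),
      wnormIJ m n wi wj ((gMat m n wi wj t * uMat m n A).mulVec (fun x => (v x : ℝ))) =
      max ((Real.exp t *
          wnorm wi (fun k => (∑ l, A k l * (v (Sum.inr l) : ℝ)) + (v (Sum.inl k) : ℝ)))
            ^ (1 / (m : ℝ)))
        ((Real.exp (-t) * wnorm wj (fun l => (v (Sum.inr l) : ℝ))) ^ (1 / (n : ℝ))) := by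
    intro t v
    rw [mulVec_eq]
    unfold wnormIJ
    simp only [Sum.elim_inl, Sum.elim_inr]
    rw [wnorm_exp_smul wi hwi t, wnorm_exp_smul wj hwj (-t)]
  constructor
  · -- Bad → orbit avoids cusp
    intro hA t ht v hv
    rw [ge_iff_le, hnorm t v]
    set q : Fin n → ℤ := fun l => v (Sum.inr l) with hqdef
    set X := wnorm wi (fun k => (∑ l, A k l * (q l : ℝ)) + (v (Sum.inl k) : ℝ)) with hXdef
    set Y := wnorm wj (fun l => (q l : ℝ)) with hYdef
    have hX0 : 0 ≤ X := wnorm_nonneg _ _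
    have hY0 : 0 ≤ Y := wnorm_nonneg _ _
    by_cases hq : q = 0
    · -- q = 0 : first block dominates
      have hp : (fun k => v (Sum.inl k)) ≠ 0 := by
        intro h0
        apply hv
        funext x
        cases x with
        | inl k => exact congrFun h0 k
        | inr l => exact congrFun hq l
      have hX1 : 1 ≤ X := by
        have : (fun k => (∑ l, A k l * (q l : ℝ)) + (v (Sum.inl k) : ℝ)) =
            fun k => ((v (Sum.inl k) : ℝ)) := by
          funext k
          have : ∀ l, q l = 0 := fun l => congrFun hq l
          simp [this]
        rw [hXdef, this]
        exact one_le_wnorm_int wi hwi _ hp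
      have h1 : 1 ≤ Real.exp t * X := by nlinarith [Real.one_le_exp ht]
      calc ε ≤ 1 := hε1.le
        _ ≤ (Real.exp t * X) ^ (1 / (m : ℝ)) := Real.one_le_rpow h1 (by positivity)
        _ ≤ _ := le_max_left _ _
    · -- q ≠ 0 : use the Bad condition
      have hXY : c ≤ X * Y := hA (fun k => v (Sum.inl k)) q hq
      by_contra hlt
      push_neg at hlt
      rw [max_lt_iff] at hlt
      obtain ⟨h1, h2⟩ := hlt
      have hm1 : (Real.exp t * X) < ε ^ m := by
        have := pow_lt_pow_left₀ h1 (Real.rpow_nonneg (by positivity) _) hm.ne'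
        rwa [one_div, Real.rpow_inv_natCast_pow (by positivity) hm.ne'] at this
      have hm2 : (Real.exp (-t) * Y) < ε ^ n := by
        have := pow_lt_pow_left₀ h2 (Real.rpow_nonneg (by positivity) _) hn.ne'
        rwa [one_div, Real.rpow_inv_natCast_pow (by positivity) hn.ne'] at this
      have hprod : (Real.exp t * X) * (Real.exp (-t) * Y) = X * Y := by
        rw [Real.exp_neg]; field_simp
      have : X * Y < c := by
        rw [← hprod, ← hεpow]
        exact mul_lt_mul'' hm1 hm2 (by positivity) (by positivity)
      linarith
  · -- orbit avoids cusp → Bad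
    intro h p q hq
    set X := wnorm wi (fun k => (∑ l, A k l * (q l : ℝ)) + (p k : ℝ)) with hXdef
    set Y := wnorm wj (fun l => (q l : ℝ)) with hYdef
    have hX0 : 0 ≤ X := wnorm_nonneg _ _
    have hY1 : 1 ≤ Y := one_le_wnorm_int wj hwj q hq
    by_contra hXY
    push_neg at hXY  -- X * Y < c
    have hεm : (0:ℝ) < ε ^ m := by positivity
    have hεn : (0:ℝ) < ε ^ n := by positivity
    set a : ℝ := Y / ε ^ n with hadef
    have ha1 : 1 < a := by
      rw [hadef, lt_div_iff₀ hεn]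
      have : ε ^ n < 1 := pow_lt_one₀ hε0.le hε1 hn.ne'
      linarith
    set b : ℝ := if X = 0 then a + 1 else ε ^ m / X with hbdef
    have hab : a < b := by
      rw [hbdef]
      split_ifs with hX
      · linarith
      · have hXpos : 0 < X := lt_of_le_of_ne hX0 (Ne.symm hX)
        rw [hadef, div_lt_div_iff₀ hεn hXpos]
        calc Y * X = X * Y := mul_comm _ _
          _ < c := hXY
          _ = ε ^ m * ε ^ n := hεpow.symm
      -- need ge_iff? ok
    set s : ℝ := (a + b) / 2 with hsdef
    have has : a < s := by rw [hsdef]; linarith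
    have hsb : s < b := by rw [hsdef]; linarith
    have hs1 : 1 < s := lt_trans ha1 has
    have hs0 : 0 < s := lt_trans one_pos hs1
    set t : ℝ := Real.log s with htdef
    have ht : 0 ≤ t := Real.log_nonneg hs1.le
    have hexp : Real.exp t = s := Real.exp_log hs0
    set v : Fin m ⊕ Fin n → ℤ := Sum.elim p q with hvdef
    have hv : v ≠ 0 := by
      intro h0
      apply hq
      funext l
      exact congrFun h0 (Sum.inr l)
    have hkey := h t ht v hv
    rw [ge_iff_le, hnorm t v] at hkey
    have hvinl : ∀ k, v (Sum.inl k) = p k := fun k => rfl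
    have hvinr : ∀ l, v (Sum.inr l) = q l := fun l => rfl
    simp only [hvinl, hvinr] at hkey
    rw [← hXdef, ← hYdef] at hkey
    -- now derive the two strict bounds
    have hb1 : Real.exp t * X < ε ^ m := by
      rw [hexp]
      by_cases hX : X = 0
      · rw [hX, mul_zero]; exact hεm
      · have hXpos : 0 < X := lt_of_le_of_ne hX0 (Ne.symm hX)
        have hsb' : s < ε ^ m / X := by rw [hbdef, if_neg hX] at hsb; exact hsb
        calc s * X < (ε ^ m / X) * X := by
              exact mul_lt_mul_of_pos_right hsb' hXpos
          _ = ε ^ m := div_mul_cancel₀ _ hXpos.ne'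
    have hb2 : Real.exp (-t) * Y < ε ^ n := by
      rw [Real.exp_neg, hexp, inv_mul_lt_iff₀ hs0]
      rw [hadef] at has
      exact (div_lt_iff₀ hεn).mp has
    have h1 : (Real.exp t * X) ^ (1 / (m : ℝ)) < ε := by
      have := Real.rpow_lt_rpow (by positivity) hb1 (by positivity : (0:ℝ) < 1 / (m:ℝ))
      rw [one_div, Real.pow_rpow_inv_natCast hε0.le hm.ne'] at this
      rw [one_div]; exact this
    have h2 : (Real.exp (-t) * Y) ^ (1 / (n : ℝ)) < ε := by
      have := Real.rpow_lt_rpow (by positivity) hb2 (by positivity : (0:ℝ) < 1 / (n:ℝ))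
      rw [one_div, Real.pow_rpow_inv_natCast hε0.le hn.ne'] at this
      rw [one_div]; exact this
    exact absurd hkey (not_le.mpr (max_lt h1 h2))
end

section
/- There is a constant C1 > 0 depending only on d such that for every g ∈ SL_d(ℝ) the following holds: if h ∈ SL_d(ℝ) satisfies h·(gℤ^d) = gℤ^d (equality of subsets of ℝ^d) and ‖h − I_d‖_op < C1 · δ(g)^d, then h = I_d. (This expresses the lower bound r_0(x) ≥ C1 δ(x)^d for the injectivity radius of the point x = g·SL_d(ℤ) in SL_d(ℝ)/SL_d(ℤ).) -/
open Matrix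

/-- The Euclidean norm on `ℝ^d`. -/
noncomputable def euclNorm {d : ℕ} (x : Fin d → ℝ) : ℝ :=
  Real.sqrt (∑ i, x i ^ 2)

/-- `δ(g) = inf {‖g v‖ : v ∈ ℤ^d, v ≠ 0}` (Euclidean norm). -/
noncomputable def deltaMin {d : ℕ} (g : Matrix (Fin d) (Fin d) ℝ) : ℝ :=
  sInf {r | ∃ v : Fin d → ℤ, v ≠ 0 ∧ r = euclNorm (g.mulVec (fun i => (v i : ℝ)))}

/-- The operator norm of a matrix with respect to the Euclidean norm on `ℝ^d`. -/
noncomputable def opNorm {d : ℕ} (M : Matrix (Fin d) (Fin d) ℝ) : ℝ :=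
  sSup ((fun x => euclNorm (M.mulVec x)) '' {x : Fin d → ℝ | euclNorm x ≤ 1})

/-- The lattice `gℤ^d = {g v : v ∈ ℤ^d} ⊆ ℝ^d`. -/
def latticeOf {d : ℕ} (g : Matrix (Fin d) (Fin d) ℝ) : Set (Fin d → ℝ) :=
  {x | ∃ v : Fin d → ℤ, x = g.mulVec (fun i => (v i : ℝ))}

/-!
If `h ≠ 1` preserves the lattice `Λ = gℤ^d`, the vectors fixed by `h` lie in a hyperplane `n^⊥`.
Minkowski's convex body theorem, applied to the ellipsoid with semi-axis `a = δ/2` along `n^⊥`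
and `b ≍ δ^(1-d)` along `n` (volume `≍ a^(d-1) b`), yields a nonzero `x ∈ Λ` with `‖x‖ ≤ b`.
Points of the ellipsoid lying in `n^⊥` have length at most `a < δ`, so `h x ≠ x`, and `h x - x`
is a nonzero vector of `Λ`: `δ ≤ ‖(h - 1) x‖ ≤ ‖h - 1‖ b`, i.e. `δ^d ≲ ‖h - 1‖`.
Minkowski's theorem also gives `δ ≲ 1`, which makes the choice `a ≤ b` possible.
-/

open WithLp MeasureTheory

section

variable {d : ℕ}

lemma euclNorm_eq_norm_toLp (x : Fin d → ℝ) : euclNorm x = ‖toLp 2 x‖ := by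
  simp [euclNorm, EuclideanSpace.norm_eq]

lemma euclNorm_smul (c : ℝ) (x : Fin d → ℝ) : euclNorm (c • x) = |c| * euclNorm x := by
  rw [euclNorm_eq_norm_toLp, euclNorm_eq_norm_toLp, toLp_smul, norm_smul, Real.norm_eq_abs]

lemma euclNorm_eq_sqrt_dotProduct (x : Fin d → ℝ) : euclNorm x = √(x ⬝ᵥ x) := by
  simp [euclNorm, dotProduct, sq]

lemma abs_dotProduct_le_euclNorm_mul (x y : Fin d → ℝ) :
    |x ⬝ᵥ y| ≤ euclNorm x * euclNorm y := by
  rw [euclNorm_eq_norm_toLp, euclNorm_eq_norm_toLp, dotProduct_comm, ← star_trivial x]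
  exact abs_real_inner_le_norm (toLp 2 x) (toLp 2 y)

lemma opNorm_eq_norm_toEuclideanCLM (M : Matrix (Fin d) (Fin d) ℝ) :
    opNorm M = ‖toEuclideanCLM (𝕜 := ℝ) M‖ := by
  have hball : {x : Fin d → ℝ | euclNorm x ≤ 1} =
      ofLp '' Metric.closedBall (0 : EuclideanSpace ℝ (Fin d)) 1 := by
    ext x
    constructor
    · intro hx
      exact ⟨toLp 2 x, by simpa [euclNorm_eq_norm_toLp] using hx, rfl⟩
    · rintro ⟨z, hz, rfl⟩
      simpa [euclNorm_eq_norm_toLp] using hz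
  rw [← ContinuousLinearMap.sSup_unitClosedBall_eq_norm, opNorm, hball, Set.image_image]
  simp only [euclNorm_eq_norm_toLp]
  rfl

lemma euclNorm_mulVec_le_opNorm_mul (M : Matrix (Fin d) (Fin d) ℝ) (x : Fin d → ℝ) :
    euclNorm (M *ᵥ x) ≤ opNorm M * euclNorm x := by
  rw [opNorm_eq_norm_toEuclideanCLM, euclNorm_eq_norm_toLp, euclNorm_eq_norm_toLp,
    ← toEuclideanCLM_toLp]
  exact (toEuclideanCLM (𝕜 := ℝ) M).le_opNorm (toLp 2 x)

lemma opNorm_nonneg (M : Matrix (Fin d) (Fin d) ℝ) : 0 ≤ opNorm M := by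
  rw [opNorm_eq_norm_toEuclideanCLM]
  exact norm_nonneg _

variable (d) in
noncomputable def ballVolume : ℝ :=
  volume.real (Metric.closedBall (0 : EuclideanSpace ℝ (Fin d)) 1)

lemma ballVolume_pos : 0 < ballVolume d :=
  ENNReal.toReal_pos (Metric.measure_closedBall_pos _ _ one_pos).ne' measure_closedBall_lt_top.ne

lemma setOf_euclNorm_le_one :
    {x : Fin d → ℝ | euclNorm x ≤ 1} =
      toLp 2 ⁻¹' Metric.closedBall (0 : EuclideanSpace ℝ (Fin d)) 1 := by
  ext x
  simp [euclNorm_eq_norm_toLp]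

lemma volume_setOf_euclNorm_le_one :
    volume {x : Fin d → ℝ | euclNorm x ≤ 1} = ENNReal.ofReal (ballVolume d) := by
  rw [setOf_euclNorm_le_one, (PiLp.volume_preserving_toLp (Fin d)).measure_preimage
    measurableSet_closedBall.nullMeasurableSet, ballVolume,
    ofReal_measureReal measure_closedBall_lt_top.ne]

lemma convex_setOf_euclNorm_le_one : Convex ℝ {x : Fin d → ℝ | euclNorm x ≤ 1} := by
  rw [setOf_euclNorm_le_one]
  exact (convex_closedBall _ _).linear_preimage
    (WithLp.linearEquiv 2 ℝ (Fin d → ℝ)).symm.toLinearMap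

lemma exists_eq_mulVec_intCast_of_mem_span (g : Matrix (Fin d) (Fin d) ℝ) {x : Fin d → ℝ}
    (hx : x ∈ Submodule.span ℤ (Set.range g.col)) :
    ∃ v : Fin d → ℤ, x = g *ᵥ (fun i => (v i : ℝ)) := by
  obtain ⟨v, rfl⟩ := (Submodule.mem_span_range_iff_exists_fun ℤ).mp hx
  refine ⟨v, ?_⟩
  ext i
  simp [mulVec, dotProduct, Finset.sum_apply, mul_comm]

/-- Minkowski's convex body theorem for the lattice `gℤ^d` and the ellipsoid `A(B)`, where `B` is
the Euclidean unit ball. -/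
theorem exists_ne_zero_mulVec_intCast_eq_mulVec (g A : Matrix (Fin d) (Fin d) ℝ)
    (hg : g.det ≠ 0) (hA : 2 ^ d * |g.det| < |A.det| * ballVolume d) :
    ∃ v : Fin d → ℤ, v ≠ 0 ∧ ∃ y, euclNorm y ≤ 1 ∧ g *ᵥ (fun i => (v i : ℝ)) = A *ᵥ y := by
  let b := (Pi.basisFun ℝ (Fin d)).map (g.toLinearEquiv (Pi.basisFun ℝ _) hg.isUnit)
  have hb : ⇑b = g.col := by
    ext j i
    simp [b, Matrix.toLin_eq_toLin', Matrix.mulVec_single]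
  let K := Matrix.toLin' A '' {y | euclNorm y ≤ 1}
  have hsymm : ∀ x ∈ K, -x ∈ K := by
    rintro - ⟨y, hy, rfl⟩
    refine ⟨-y, ?_, map_neg _ y⟩
    simpa [euclNorm] using hy
  have hvol : volume (ZSpan.fundamentalDomain b) * 2 ^ Module.finrank ℝ (Fin d → ℝ) <
      volume K := by
    rw [ZSpan.volume_fundamentalDomain, Measure.addHaar_image_linearMap,
      volume_setOf_euclNorm_le_one, LinearMap.det_toLin', hb, Module.finrank_fin_fun,
      show (Matrix.of g.col).det = g.det from det_transpose g, ← ENNReal.ofReal_ofNat 2,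
      ← ENNReal.ofReal_pow zero_le_two, ← ENNReal.ofReal_mul (abs_nonneg _),
      ← ENNReal.ofReal_mul (abs_nonneg _), ENNReal.ofReal_lt_ofReal_iff']
    exact ⟨by linarith, hA.trans_le' (by positivity)⟩
  have : Countable (Submodule.span ℤ (Set.range b)).toAddSubgroup :=
    inferInstanceAs (Countable (Submodule.span ℤ (Set.range b)))
  obtain ⟨⟨x, hxL⟩, hx0, y, hy, hyx⟩ :=
    exists_ne_zero_mem_lattice_of_measure_mul_two_pow_lt_measure
      (ZSpan.isAddFundamentalDomain' b volume) hsymm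
      (convex_setOf_euclNorm_le_one.linear_image _) hvol
  rw [hb] at hxL
  obtain ⟨v, rfl⟩ := exists_eq_mulVec_intCast_of_mem_span g hxL
  refine ⟨v, ?_, y, hy, hyx.symm⟩
  rintro rfl
  exact hx0 (Subtype.ext (by simp [← Pi.zero_def]))

lemma deltaMin_nonneg (g : Matrix (Fin d) (Fin d) ℝ) : 0 ≤ deltaMin g := by
  refine Real.sInf_nonneg ?_
  rintro - ⟨v, -, rfl⟩
  exact Real.sqrt_nonneg _

lemma deltaMin_le_euclNorm_mulVec (g : Matrix (Fin d) (Fin d) ℝ) {v : Fin d → ℤ} (hv : v ≠ 0) :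
    deltaMin g ≤ euclNorm (g *ᵥ (fun i => (v i : ℝ))) :=
  csInf_le ⟨0, by rintro - ⟨w, -, rfl⟩; exact Real.sqrt_nonneg _⟩ ⟨v, hv, rfl⟩

lemma deltaMin_le_euclNorm_sub_one_mulVec {g h : Matrix (Fin d) (Fin d) ℝ}
    (hmaps : Set.MapsTo (h *ᵥ ·) (latticeOf g) (latticeOf g)) {x : Fin d → ℝ}
    (hx : x ∈ latticeOf g) (hmoved : h *ᵥ x ≠ x) :
    deltaMin g ≤ euclNorm ((h - 1) *ᵥ x) := by
  obtain ⟨u, hu : h *ᵥ x = _⟩ := hmaps hx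
  obtain ⟨v, rfl⟩ := hx
  have huv : u - v ≠ 0 := fun huv => hmoved (by rw [hu, sub_eq_zero.mp huv])
  convert deltaMin_le_euclNorm_mulVec g huv using 2
  rw [sub_mulVec, one_mulVec, hu, ← mulVec_sub]
  congr 1
  ext i
  simp

variable (d) in
/-- Any radius `r` with `2^d < r^d vol(B)` would do. -/
noncomputable def minkowskiRadius : ℝ := 2 * (1 + (ballVolume d)⁻¹)

lemma minkowskiRadius_pos : 0 < minkowskiRadius d := by
  have := ballVolume_pos (d := d)
  unfold minkowskiRadius
  positivity

lemma deltaMin_le_minkowskiRadius (hd : d ≠ 0) {g : Matrix (Fin d) (Fin d) ℝ} (hg : g.det = 1) :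
    deltaMin g ≤ minkowskiRadius d := by
  set r := minkowskiRadius d
  have hV := ballVolume_pos (d := d)
  have hr : 2 ^ d * |g.det| < |(r • (1 : Matrix (Fin d) (Fin d) ℝ)).det| * ballVolume d := by
    have hgrow : 1 + (ballVolume d)⁻¹ ≤ (1 + (ballVolume d)⁻¹) ^ d :=
      le_self_pow₀ (by simp [hV.le]) hd
    rw [hg, det_smul, det_one, Fintype.card_fin, mul_one, abs_one, mul_one,
      abs_of_pos (pow_pos minkowskiRadius_pos d), minkowskiRadius, mul_pow]
    calc (2 : ℝ) ^ d < 2 ^ d * ((1 + (ballVolume d)⁻¹) * ballVolume d) := by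
          rw [add_mul, inv_mul_cancel₀ hV.ne']
          nlinarith [pow_pos (two_pos (α := ℝ)) d]
      _ ≤ 2 ^ d * (1 + (ballVolume d)⁻¹) ^ d * ballVolume d := by
          rw [mul_assoc]
          gcongr
  obtain ⟨v, hv, y, hy, hgv⟩ := exists_ne_zero_mulVec_intCast_eq_mulVec g _ (by simp [hg]) hr
  calc deltaMin g ≤ euclNorm (g *ᵥ (fun i => (v i : ℝ))) := deltaMin_le_euclNorm_mulVec g hv
    _ = r * euclNorm y := by
        rw [hgv, smul_mulVec, one_mulVec, euclNorm_smul, abs_of_pos minkowskiRadius_pos]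
    _ ≤ r := mul_le_of_le_one_right minkowskiRadius_pos.le hy

lemma exists_unit_dotProduct_eq_zero_of_mulVec_eq_zero {M : Matrix (Fin d) (Fin d) ℝ}
    (hM : M ≠ 0) : ∃ n : Fin d → ℝ, n ⬝ᵥ n = 1 ∧ ∀ x, M *ᵥ x = 0 → n ⬝ᵥ x = 0 := by
  obtain ⟨i, hi⟩ : ∃ i, M i ≠ 0 := by
    by_contra! h
    exact hM (funext h)
  have hpos : 0 < M i ⬝ᵥ M i :=
    lt_of_le_of_ne (Finset.sum_nonneg fun j _ => mul_self_nonneg _)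
      (Ne.symm (dotProduct_self_eq_zero.not.mpr hi))
  refine ⟨(√(M i ⬝ᵥ M i))⁻¹ • M i, ?_, fun x hx => ?_⟩
  · rw [smul_dotProduct, dotProduct_smul, smul_eq_mul, smul_eq_mul, ← mul_assoc, ← mul_inv,
      Real.mul_self_sqrt hpos.le, inv_mul_cancel₀ hpos.ne']
  · have : M i ⬝ᵥ x = 0 := congrFun hx i
    rw [smul_dotProduct, this, smul_zero]

/-- For a unit vector `n`, multiplication by `b` on `ℝ n` and by `a` on `n^⊥`. -/
def axialScaling (a b : ℝ) (n : Fin d → ℝ) : Matrix (Fin d) (Fin d) ℝ :=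
  a • 1 + (b - a) • vecMulVec n n

section axialScaling

variable {a b : ℝ} {n : Fin d → ℝ}

lemma axialScaling_mulVec (y : Fin d → ℝ) :
    axialScaling a b n *ᵥ y = a • y + ((b - a) * (n ⬝ᵥ y)) • n := by
  simp [axialScaling, add_mulVec, smul_mulVec, vecMulVec_mulVec, mul_smul]

lemma dotProduct_axialScaling_mulVec (hn : n ⬝ᵥ n = 1) (y : Fin d → ℝ) :
    n ⬝ᵥ (axialScaling a b n *ᵥ y) = b * (n ⬝ᵥ y) := by
  rw [axialScaling_mulVec, dotProduct_add, dotProduct_smul, dotProduct_smul, hn, smul_eq_mul,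
    smul_eq_mul]
  ring

lemma det_axialScaling (ha : a ≠ 0) (hn : n ⬝ᵥ n = 1) :
    (axialScaling a b n).det = a ^ (d - 1) * b := by
  have hd : d ≠ 0 := by
    rintro rfl
    simp at hn
  have : axialScaling a b n =
      a • (1 + replicateCol Unit (((b - a) / a) • n) * replicateRow Unit n) := by
    rw [← vecMulVec_eq, smul_vecMulVec, smul_add, smul_smul, mul_div_cancel₀ _ ha,
      axialScaling]
  rw [this, det_smul, det_one_add_replicateCol_mul_replicateRow, dotProduct_smul, hn,
    Fintype.card_fin, smul_eq_mul, mul_one]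
  obtain ⟨k, rfl⟩ := Nat.exists_eq_succ_of_ne_zero hd
  rw [Nat.succ_sub_one, pow_succ]
  field_simp
  ring

lemma euclNorm_axialScaling_mulVec_le (ha : 0 ≤ a) (hab : a ≤ b) (hn : n ⬝ᵥ n = 1)
    (y : Fin d → ℝ) : euclNorm (axialScaling a b n *ᵥ y) ≤ b * euclNorm y := by
  have hn1 : euclNorm n = 1 := by rw [euclNorm_eq_sqrt_dotProduct, hn, Real.sqrt_one]
  have hny := abs_dotProduct_le_euclNorm_mul n y
  rw [hn1, one_mul] at hny
  have hba : 0 ≤ b - a := sub_nonneg.2 hab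
  calc euclNorm (axialScaling a b n *ᵥ y)
      ≤ a * euclNorm y + (b - a) * |n ⬝ᵥ y| * euclNorm n := by
        rw [axialScaling_mulVec, euclNorm_eq_norm_toLp, toLp_add, toLp_smul, toLp_smul,
          euclNorm_eq_norm_toLp, euclNorm_eq_norm_toLp]
        refine (norm_add_le _ _).trans_eq ?_
        rw [norm_smul, norm_smul, Real.norm_eq_abs, Real.norm_eq_abs, abs_mul, abs_of_nonneg ha,
          abs_of_nonneg hba]
    _ ≤ a * euclNorm y + (b - a) * euclNorm y := by rw [hn1, mul_one]; gcongr
    _ = b * euclNorm y := by ring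

end axialScaling

theorem deltaMin_le_opNorm_sub_one_mul {g h : Matrix (Fin d) (Fin d) ℝ} (hg : g.det ≠ 0)
    (hmaps : Set.MapsTo (h *ᵥ ·) (latticeOf g) (latticeOf g)) (hh : h ≠ 1) {a b : ℝ}
    (ha : 0 < a) (haδ : a < deltaMin g) (hab : a ≤ b)
    (hvol : 2 ^ d * |g.det| < a ^ (d - 1) * b * ballVolume d) :
    deltaMin g ≤ opNorm (h - 1) * b := by
  have hb : 0 < b := ha.trans_le hab
  obtain ⟨n, hn, hn_fixed⟩ := exists_unit_dotProduct_eq_zero_of_mulVec_eq_zero (sub_ne_zero.2 hh)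
  obtain ⟨v, hv, y, hy, hgv⟩ := exists_ne_zero_mulVec_intCast_eq_mulVec g (axialScaling a b n) hg
    (by rwa [det_axialScaling ha.ne' hn, abs_of_pos (by positivity : 0 < a ^ (d - 1) * b)])
  set x := g *ᵥ (fun i => (v i : ℝ))
  have hx_le : euclNorm x ≤ b := by
    rw [hgv]
    exact (euclNorm_axialScaling_mulVec_le ha.le hab hn y).trans (mul_le_of_le_one_right hb.le hy)
  have hmoved : h *ᵥ x ≠ x := by
    intro hfix
    have hny : n ⬝ᵥ y = 0 := by
      have := hn_fixed x (by rw [sub_mulVec, one_mulVec, hfix, sub_self])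
      rw [hgv, dotProduct_axialScaling_mulVec hn] at this
      exact (mul_eq_zero.1 this).resolve_left hb.ne'
    have : euclNorm x ≤ a := by
      rw [hgv, axialScaling_mulVec, hny, mul_zero, zero_smul, add_zero, euclNorm_smul,
        abs_of_pos ha]
      exact mul_le_of_le_one_right ha.le hy
    exact (deltaMin_le_euclNorm_mulVec g hv).trans this |>.not_gt haδ
  calc deltaMin g ≤ euclNorm ((h - 1) *ᵥ x) :=
        deltaMin_le_euclNorm_sub_one_mulVec hmaps ⟨v, rfl⟩ hmoved
    _ ≤ opNorm (h - 1) * euclNorm x := euclNorm_mulVec_le_opNorm_mul _ _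
    _ ≤ opNorm (h - 1) * b := by gcongr; exact opNorm_nonneg _

variable (d) in
/-- With `a = δ/2` and `b = injRadiusConst d / δ^(d-1)`, the first summand ensures `a ≤ b`
and the second `2^d < a^(d-1) b vol(B)`. -/
noncomputable def injRadiusConst : ℝ := minkowskiRadius d ^ d / 2 + 4 ^ d / ballVolume d

lemma injRadiusConst_pos : 0 < injRadiusConst d := by
  have := ballVolume_pos (d := d)
  have := minkowskiRadius_pos (d := d)
  unfold injRadiusConst
  positivity

lemma four_pow_lt_injRadiusConst_mul_ballVolume : 4 ^ d < injRadiusConst d * ballVolume d := by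
  have hV := ballVolume_pos (d := d)
  rw [injRadiusConst, add_mul, div_mul_cancel₀ _ hV.ne', lt_add_iff_pos_left]
  have := minkowskiRadius_pos (d := d)
  positivity

theorem deltaMin_pow_le_opNorm_mul {g h : Matrix (Fin d) (Fin d) ℝ} (hg : g.det = 1)
    (hmaps : Set.MapsTo (h *ᵥ ·) (latticeOf g) (latticeOf g)) (hh : h ≠ 1) :
    deltaMin g ^ d ≤ opNorm (h - 1) * injRadiusConst d := by
  obtain ⟨k, rfl⟩ : ∃ k, d = k + 1 :=
    Nat.exists_eq_succ_of_ne_zero (by rintro rfl; exact hh (Subsingleton.elim _ _))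
  rcases (deltaMin_nonneg g).eq_or_lt with hδ | hδ
  · rw [← hδ, zero_pow k.succ_ne_zero]
    exact mul_nonneg (opNorm_nonneg _) injRadiusConst_pos.le
  set δ := deltaMin g
  set M := injRadiusConst (k + 1)
  have hab : δ / 2 ≤ M / δ ^ k := by
    rw [le_div_iff₀ (pow_pos hδ k)]
    calc δ / 2 * δ ^ k = δ ^ (k + 1) / 2 := by ring
      _ ≤ minkowskiRadius (k + 1) ^ (k + 1) / 2 := by
          gcongr
          exact deltaMin_le_minkowskiRadius k.succ_ne_zero hg
      _ ≤ M := le_add_of_nonneg_right (div_nonneg (by positivity) ballVolume_pos.le)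
  have hvol : 2 ^ (k + 1) * |g.det| < (δ / 2) ^ (k + 1 - 1) * (M / δ ^ k) * ballVolume (k + 1) := by
    rw [hg, abs_one, mul_one, Nat.add_sub_cancel, div_pow,
      show δ ^ k / 2 ^ k * (M / δ ^ k) * ballVolume (k + 1) = M * ballVolume (k + 1) / 2 ^ k by
        field_simp, lt_div_iff₀ (by positivity)]
    calc (2 : ℝ) ^ (k + 1) * 2 ^ k ≤ 4 ^ (k + 1) := by
          rw [← pow_add, show (4 : ℝ) = 2 ^ 2 by norm_num, ← pow_mul]
          exact pow_le_pow_right₀ one_le_two (by omega)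
      _ < M * ballVolume (k + 1) := four_pow_lt_injRadiusConst_mul_ballVolume
  have key := deltaMin_le_opNorm_sub_one_mul (by simp [hg]) hmaps hh (half_pos hδ)
    (half_lt_self hδ) hab hvol
  rw [mul_div_assoc', le_div_iff₀ (pow_pos hδ k)] at key
  rwa [pow_succ']

end

theorem injectivity_radius_lower_bound_general (d : ℕ) :
    ∃ C1 : ℝ, 0 < C1 ∧
      ∀ g h : Matrix (Fin d) (Fin d) ℝ, g.det = 1 → h.det = 1 →
        (fun x => h.mulVec x) '' latticeOf g = latticeOf g →
        opNorm (h - 1) < C1 * (deltaMin g) ^ d →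
        h = 1 := by
  refine ⟨(injRadiusConst d)⁻¹, inv_pos.2 injRadiusConst_pos, fun g h hg _ hlat hop => ?_⟩
  by_contra hh
  have hmaps : Set.MapsTo (h *ᵥ ·) (latticeOf g) (latticeOf g) :=
    Set.mapsTo_iff_image_subset.2 hlat.subset
  have hle := deltaMin_pow_le_opNorm_mul hg hmaps hh
  rw [inv_mul_eq_div, lt_div_iff₀ injRadiusConst_pos] at hop
  exact hle.not_gt hop

/-- Lower bound for the injectivity radius: there is `C₁ > 0` depending only on `d`
such that for `g ∈ SL_d(ℝ)`, any `h ∈ SL_d(ℝ)` stabilizing the lattice `gℤ^d` with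
`‖h − I_d‖_op < C₁ δ(g)^d` must equal the identity. -/
theorem injectivity_radius_lower_bound (d : ℕ) (hd : 2 ≤ d) :
    ∃ C1 : ℝ, 0 < C1 ∧
      ∀ g h : Matrix (Fin d) (Fin d) ℝ, g.det = 1 → h.det = 1 →
        (fun x => h.mulVec x) '' latticeOf g = latticeOf g →
        opNorm (h - 1) < C1 * (deltaMin g) ^ d →
        h = 1 :=
  injectivity_radius_lower_bound_general d
end

section
/- Let d ≥ 2, let Λ ⊂ ℝ^d be a lattice of full rank d, and let D ⊂ ℝ^d be a bounded convex set with D = −D. Let P¹ = {v ∈ Λ ∩ D : v is primitive in Λ} and P² = {(v1, v2) ∈ (Λ ∩ D) × (Λ ∩ D) : (v1, v2) is a primitive pair in Λ}. If the cardinality of P¹ is greater than 2, then |P¹| ≤ (1/2) · |P²|. -/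
/-- `v` is primitive in the lattice `Λ`: it is an element of some `ℤ`-basis of `Λ`
(equivalently, the first element of some `ℤ`-basis). -/
def IsPrimitiveVec (d : ℕ) (Λ : Submodule ℤ (Fin d → ℝ)) (v : Fin d → ℝ) : Prop :=
  ∃ (b : Module.Basis (Fin d) ℤ Λ) (k : Fin d), ((b k : Λ) : Fin d → ℝ) = v

/-- `(v₁, v₂)` is a primitive pair in the lattice `Λ`: they are two distinct elements
of some `ℤ`-basis of `Λ` (equivalently, the first two elements of some `ℤ`-basis). -/
def IsPrimitivePair (d : ℕ) (Λ : Submodule ℤ (Fin d → ℝ)) (v₁ v₂ : Fin d → ℝ) : Prop :=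
  ∃ (b : Module.Basis (Fin d) ℤ Λ) (k l : Fin d), k ≠ l ∧
    ((b k : Λ) : Fin d → ℝ) = v₁ ∧ ((b l : Λ) : Fin d → ℝ) = v₂

/-! Given a primitive `v ∈ D`, the hypothesis `|P¹| > 2` provides another primitive `w ∈ D` with
`w ≠ ±v`. Writing `v = b k` for a basis `b`, the coordinates of `w` off `k` have a positive gcd
`g`, so `w = a • v + g • u` with `(v, u)` a primitive pair; shifting `u` by a multiple of `v`
brings `a` to its balanced residue mod `g`, so that `1 + |a| ≤ g`. Then
`u = (1/g) • w - (a/g) • v` lies in `D` by convexity and symmetry, and `(v, u)`, `(v, -u)` are two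
distinct primitive pairs in `D` with first entry `v`. -/

open Module

section Convex

variable {E : Type*} [AddCommGroup E] [Module ℝ E] {D : Set E} {x y : E}

theorem Convex.smul_add_smul_mem_of_zero_mem (hD : Convex ℝ D) (h0 : (0 : E) ∈ D)
    (hx : x ∈ D) (hy : y ∈ D) {a b : ℝ} (ha : 0 ≤ a) (hb : 0 ≤ b) (hab : a + b ≤ 1) :
    a • x + b • y ∈ D := by
  rcases (add_nonneg ha hb).eq_or_lt with hzero | hpos
  · obtain ⟨rfl, rfl⟩ := (add_eq_zero_iff_of_nonneg ha hb).1 hzero.symm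
    simpa using h0
  · have hcombo : (a / (a + b)) • x + (b / (a + b)) • y ∈ D :=
      hD hx hy (by positivity) (by positivity) (by field_simp)
    convert hD.smul_mem_of_zero_mem h0 hcombo ⟨hpos.le, hab⟩ using 1
    rw [smul_add, smul_smul, smul_smul, mul_div_cancel₀ _ hpos.ne', mul_div_cancel₀ _ hpos.ne']

theorem exists_mem_smul_eq_abs_smul (hneg : ∀ z ∈ D, -z ∈ D) (hx : x ∈ D) (α : ℝ) :
    ∃ x' ∈ D, α • x = |α| • x' := by
  rcases abs_cases α with ⟨h, -⟩ | ⟨h, -⟩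
  · exact ⟨x, hx, by rw [h]⟩
  · exact ⟨-x, hneg x hx, by rw [h, neg_smul_neg]⟩

theorem Convex.smul_add_smul_mem_of_neg_eq (hD : Convex ℝ D) (hsymm : -D = D)
    (hx : x ∈ D) (hy : y ∈ D) {α β : ℝ} (h : |α| + |β| ≤ 1) : α • x + β • y ∈ D := by
  have hneg : ∀ z ∈ D, -z ∈ D := fun z hz => hsymm ▸ Set.neg_mem_neg.2 hz
  have h0 : (0 : E) ∈ D := by
    simpa using hD hx (hneg x hx) (by norm_num : (0 : ℝ) ≤ 1 / 2)
      (by norm_num : (0 : ℝ) ≤ 1 / 2) (by norm_num)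
  obtain ⟨x', hx', hαx⟩ := exists_mem_smul_eq_abs_smul hneg hx α
  obtain ⟨y', hy', hβy⟩ := exists_mem_smul_eq_abs_smul hneg hy β
  rw [hαx, hβy]
  exact hD.smul_add_smul_mem_of_zero_mem h0 hx' hy' (abs_nonneg _) (abs_nonneg _) h

end Convex

theorem Set.two_mul_ncard_le_ncard_of_two_graphs {α β : Type*} {A : Set α} {B : Set (α × β)}
    (hB : B.Finite) (f g : α → β) (hfg : ∀ a ∈ A, f a ≠ g a)
    (hf : ∀ a ∈ A, (a, f a) ∈ B) (hg : ∀ a ∈ A, (a, g a) ∈ B) :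
    2 * A.ncard ≤ B.ncard := by
  calc 2 * A.ncard = (A ×ˢ (Set.univ : Set Bool)).ncard := by
        rw [Set.ncard_prod, Set.ncard_univ, Nat.card_eq_fintype_card, Fintype.card_bool, mul_comm]
    _ ≤ B.ncard := by
      refine Set.ncard_le_ncard_of_injOn (fun p => (p.1, if p.2 then f p.1 else g p.1)) ?_ ?_ hB
      · rintro ⟨a, _ | _⟩ ⟨ha, -⟩
        exacts [hg a ha, hf a ha]
      · rintro ⟨a, s⟩ ⟨ha, -⟩ ⟨a', s'⟩ - h
        obtain ⟨rfl, h⟩ := Prod.mk.inj h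
        have := hfg a ha
        cases s <;> cases s' <;> simp_all [eq_comm]

theorem LinearMap.isCompl_range_ker_of_comp_eq_id {R M N : Type*} [Ring R] [AddCommGroup M]
    [Module R M] [AddCommGroup N] [Module R N] {σ : N →ₗ[R] M} {ψ : M →ₗ[R] N}
    (h : ψ ∘ₗ σ = LinearMap.id) : IsCompl (range σ) (ker ψ) := by
  have hidem : IsIdempotentElem (σ ∘ₗ ψ) := by
    ext m
    simp only [Module.End.mul_apply, LinearMap.comp_apply]
    rw [← LinearMap.comp_apply ψ σ, h, LinearMap.id_apply]
  have := IsIdempotentElem.isCompl hidem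
  rwa [LinearMap.range_comp_of_range_eq_top _ (LinearMap.range_eq_top_of_surjective _
      (LinearMap.surjective_of_comp_eq_id _ _ h)),
    LinearMap.ker_comp_of_ker_eq_bot _ (LinearMap.ker_eq_bot_of_injective
      (LinearMap.injective_of_comp_eq_id _ _ h))] at this

section Basis

variable {R M : Type*} [CommRing R] [AddCommGroup M] [Module R M]

theorem Module.Basis.isUnit_of_eq_smul {ι : Type*} (b : Basis ι R M) {i : ι} {c : R} {x : M}
    (h : b i = c • x) : IsUnit c :=
  IsUnit.of_mul_eq_one (b.repr x i) (by simpa using (congrArg (fun z => b.repr z i) h).symm)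

variable [IsDomain R] [IsPrincipalIdealRing R]

theorem Module.Basis.exists_basis_extending_of_comp_eq_id {N ι κ : Type*} [AddCommGroup N]
    [Module R N] [Finite ι] (b₀ : Basis ι R M) (bN : Basis κ R N) {σ : N →ₗ[R] M}
    {ψ : M →ₗ[R] N} (h : ψ ∘ₗ σ = LinearMap.id) :
    ∃ (b : Basis ι R M) (e : κ ↪ ι), ∀ i, b (e i) = σ (bN i) := by
  obtain ⟨n, bK⟩ := Submodule.basisOfPid b₀ (LinearMap.ker ψ)
  let bR := bN.map (LinearEquiv.ofInjective σ (LinearMap.injective_of_comp_eq_id _ _ h))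
  let bM := (bR.prod bK).map
    (Submodule.prodEquivOfIsCompl _ _ (LinearMap.isCompl_range_ker_of_comp_eq_id h))
  let e := bM.indexEquiv b₀
  refine ⟨bM.reindex e, Function.Embedding.inl.trans e.toEmbedding, fun i => ?_⟩
  simp [bM, bR]

theorem Module.Basis.exists_basis_pair_of_functionals {ι : Type*} [Finite ι] (b₀ : Basis ι R M)
    {x y : M} {f g : M →ₗ[R] R} (hfx : f x = 1) (hgx : g x = 0) (hgy : g y = 1) :
    ∃ (b : Basis ι R M) (k l : ι), k ≠ l ∧ b k = x ∧ b l = y := by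
  let σ : R × R →ₗ[R] M :=
    (LinearMap.toSpanSingleton R M x).coprod (LinearMap.toSpanSingleton R M y)
  let ψ : M →ₗ[R] R × R := (f - f y • g).prod g
  have h : ψ ∘ₗ σ = LinearMap.id := by
    ext <;> simp [σ, ψ, hfx, hgx, hgy]
  obtain ⟨b, e, he⟩ := b₀.exists_basis_extending_of_comp_eq_id (Basis.finTwoProd R) h
  exact ⟨b, e 0, e 1, e.injective.ne (by decide), by simp [he, σ], by simp [he, σ]⟩

end Basis

namespace Module.Basis

variable {M ι : Type*} [AddCommGroup M] (b : Basis ι ℤ M) (k : ι)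

theorem exists_repr_ne_zero_of_ne_of_ne_neg {ι' : Type*} (b' : Basis ι' ℤ M) (l : ι')
    (hpos : b' l ≠ b k) (hneg : b' l ≠ -b k) : ∃ i ≠ k, b.repr (b' l) i ≠ 0 := by
  by_contra! h
  have hsmul : b' l = b.repr (b' l) k • b k := b.ext_elem fun i => by
    by_cases hi : i = k
    · simp [hi]
    · simp [h i hi, Ne.symm hi]
  rcases Int.isUnit_iff.1 (b'.isUnit_of_eq_smul hsmul) with hc | hc <;>
    simp [hc, hpos, hneg] at hsmul

variable [Fintype ι] [DecidableEq ι]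

theorem exists_eq_repr_smul_add_smul {w : M} (h : ∃ i ≠ k, b.repr w i ≠ 0) :
    ∃ (g : ℕ) (u : M) (φ : M →ₗ[ℤ] ℤ), 0 < g ∧ w = b.repr w k • b k + (g : ℤ) • u ∧
      φ (b k) = 0 ∧ φ u = 1 := by
  obtain ⟨i₀, hi₀k, hi₀⟩ := h
  set c := b.repr w
  set s := Finset.univ.erase k
  have hi₀s : i₀ ∈ s := Finset.mem_erase_of_ne_of_mem hi₀k (Finset.mem_univ _)
  have hG : 0 < s.gcd c := lt_of_le_of_ne (Int.nonneg_of_normalize_eq_self Finset.normalize_gcd)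
    fun h => hi₀ (Finset.gcd_eq_zero_iff.1 h.symm i₀ hi₀s)
  -- `u` has the coordinates of `w` off `k`, divided by their gcd; Bézout for them gives `φ`.
  set t : ι → ℤ := fun i => if i = k then 0 else c i / s.gcd c
  have ht : s.gcd t = 1 := by
    rw [← Finset.gcd_div_eq_one hi₀s hi₀]
    exact Finset.gcd_congr rfl fun i hi => if_neg (Finset.ne_of_mem_erase hi)
  obtain ⟨u, hu⟩ : ∃ u : M, ∀ i, b.repr u i = t i :=
    ⟨b.equivFun.symm t, fun i => congrFun (b.equivFun.apply_symm_apply t) i⟩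
  obtain ⟨e, he⟩ := Finset.gcd_eq_sum_mul s t
  refine ⟨(s.gcd c).toNat, u, ∑ i ∈ s, e i • b.coord i, by omega, ?_, ?_, ?_⟩
  · rw [Int.toNat_of_nonneg hG.le]
    refine b.ext_elem fun i => ?_
    by_cases hi : i = k
    · simp [hi, hu, t, c]
    · simp only [map_add, map_smul, repr_self, Finsupp.add_apply, Finsupp.smul_apply, hu, t,
        Finsupp.single_apply, if_neg (Ne.symm hi), if_neg hi, smul_eq_mul, mul_zero, zero_add]
      exact (Int.mul_ediv_cancel' (Finset.gcd_dvd (Finset.mem_erase_of_ne_of_mem hi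
        (Finset.mem_univ i)))).symm
  · simp only [LinearMap.sum_apply, LinearMap.smul_apply, coord_apply, repr_self]
    refine Finset.sum_eq_zero fun i hi => ?_
    simp [Ne.symm (Finset.ne_of_mem_erase hi)]
  · simp only [LinearMap.sum_apply, LinearMap.smul_apply, coord_apply, hu]
    simp [← ht, he, mul_comm]

theorem exists_eq_smul_add_smul_of_one_add_abs_le {w : M} (h : ∃ i ≠ k, b.repr w i ≠ 0) :
    ∃ (a : ℤ) (g : ℕ) (u : M) (φ : M →ₗ[ℤ] ℤ), 1 + |a| ≤ g ∧ w = a • b k + (g : ℤ) • u ∧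
      φ (b k) = 0 ∧ φ u = 1 := by
  obtain ⟨g, u, φ, hg, hw, hφk, hφu⟩ := b.exists_eq_repr_smul_add_smul k h
  set c := b.repr w k
  obtain ⟨m, hm⟩ : (g : ℤ) ∣ c - c.bmod g := Int.dvd_self_sub_bmod
  refine ⟨c.bmod g, g, u + m • b k, φ, ?_, ?_, hφk, by simp [hφk, hφu]⟩
  · have := Int.le_bmod (x := c) hg
    have := Int.bmod_lt (x := c) hg
    rcases abs_cases (c.bmod g) with ⟨h, -⟩ | ⟨h, -⟩ <;> omega
  · rw [hw, smul_add, smul_smul, ← hm]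
    module

end Module.Basis

namespace IsPrimitivePair

variable {d : ℕ} {Λ : Submodule ℤ (Fin d → ℝ)} {v u : Fin d → ℝ}

theorem isPrimitiveVec_left (h : IsPrimitivePair d Λ v u) : IsPrimitiveVec d Λ v :=
  let ⟨b, k, _, _, hk, _⟩ := h; ⟨b, k, hk⟩

theorem isPrimitiveVec_right (h : IsPrimitivePair d Λ v u) : IsPrimitiveVec d Λ u :=
  let ⟨b, _, l, _, _, hl⟩ := h; ⟨b, l, hl⟩

theorem right_ne_zero (h : IsPrimitivePair d Λ v u) : u ≠ 0 := by
  obtain ⟨b, -, l, -, -, rfl⟩ := h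
  exact Submodule.coe_eq_zero.not.2 (b.ne_zero l)

theorem neg_right (h : IsPrimitivePair d Λ v u) : IsPrimitivePair d Λ v (-u) := by
  obtain ⟨b, k, l, hkl, rfl, rfl⟩ := h
  refine ⟨b.unitsSMul (Pi.mulSingle l (-1)), k, l, hkl, ?_, ?_⟩ <;>
    simp [Basis.unitsSMul_apply, hkl]

end IsPrimitivePair

theorem exists_isPrimitivePair_mem_of_convex {d : ℕ} {Λ : Submodule ℤ (Fin d → ℝ)}
    {D : Set (Fin d → ℝ)} (hD : Convex ℝ D) (hsymm : -D = D) {v w : Fin d → ℝ}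
    (hvD : v ∈ D) (hv : IsPrimitiveVec d Λ v) (hwD : w ∈ D) (hw : IsPrimitiveVec d Λ w)
    (hwv : w ≠ v) (hwv' : w ≠ -v) : ∃ u ∈ Λ, u ∈ D ∧ IsPrimitivePair d Λ v u := by
  obtain ⟨b, k, rfl⟩ := hv
  obtain ⟨b', l, rfl⟩ := hw
  have hcoord := b.exists_repr_ne_zero_of_ne_of_ne_neg k b' l (fun h => hwv (by rw [h]))
    (fun h => hwv' (by rw [h]; rfl))
  obtain ⟨a, g, u, φ, hag, hw, hφk, hφu⟩ := b.exists_eq_smul_add_smul_of_one_add_abs_le k hcoord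
  obtain ⟨b'', k', l', hkl, hk', hl'⟩ :=
    b.exists_basis_pair_of_functionals (f := b.coord k) (by simp) hφk hφu
  refine ⟨u, u.2, ?_, b'', k', l', hkl, by rw [hk'], by rw [hl']⟩
  have hg : (0 : ℝ) < g := by exact_mod_cast (show (0 : ℤ) < g by linarith [abs_nonneg a])
  have hu : (u : Fin d → ℝ) =
      (1 / g : ℝ) • (b' l : Fin d → ℝ) + (-a / g : ℝ) • (b k : Fin d → ℝ) := by
    rw [hw]
    push_cast [← Int.cast_smul_eq_zsmul ℝ]
    match_scalars
    · field_simp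
    · ring
  rw [hu]
  refine hD.smul_add_smul_mem_of_neg_eq hsymm hwD hvD ?_
  rw [abs_div, abs_div, abs_neg, abs_one, abs_of_pos hg, ← add_div, div_le_one hg]
  exact_mod_cast hag

theorem card_primitive_le_card_pairs_general (d : ℕ)
    (Λ : Submodule ℤ (Fin d → ℝ))
    (D : Set (Fin d → ℝ)) (hD : Convex ℝ D)
    (hsymm : -D = D)
    (hcard : 2 < {v | v ∈ Λ ∧ v ∈ D ∧ IsPrimitiveVec d Λ v}.ncard) :
    2 * {v | v ∈ Λ ∧ v ∈ D ∧ IsPrimitiveVec d Λ v}.ncard ≤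
      {q : (Fin d → ℝ) × (Fin d → ℝ) | q.1 ∈ Λ ∧ q.1 ∈ D ∧ q.2 ∈ Λ ∧ q.2 ∈ D ∧
        IsPrimitivePair d Λ q.1 q.2}.ncard := by
  set P₁ := {v | v ∈ Λ ∧ v ∈ D ∧ IsPrimitiveVec d Λ v}
  set P₂ := {q : (Fin d → ℝ) × (Fin d → ℝ) | q.1 ∈ Λ ∧ q.1 ∈ D ∧ q.2 ∈ Λ ∧ q.2 ∈ D ∧
    IsPrimitivePair d Λ q.1 q.2}
  have hP₁ : P₁.Finite := Set.finite_of_ncard_pos (by omega)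
  have hP₂ : P₂.Finite := (hP₁.prod hP₁).subset fun _ ⟨h₁, h₂, h₃, h₄, h⟩ =>
    ⟨⟨h₁, h₂, h.isPrimitiveVec_left⟩, ⟨h₃, h₄, h.isPrimitiveVec_right⟩⟩
  have hpartner : ∀ v ∈ P₁, ∃ u, (v, u) ∈ P₂ := by
    rintro v ⟨hvΛ, hvD, hv⟩
    obtain ⟨w, ⟨-, hwD, hw⟩, hw_ne⟩ := Set.exists_mem_notMem_of_ncard_lt_ncard (t := P₁)
      ((Set.ncard_insert_le v {-v}).trans_lt (by rwa [Set.ncard_singleton]))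
    obtain ⟨u, huΛ, huD, hvu⟩ := exists_isPrimitivePair_mem_of_convex hD hsymm hvD hv hwD hw
      (fun h => hw_ne (Or.inl h)) (fun h => hw_ne (Or.inr h))
    exact ⟨u, hvΛ, hvD, huΛ, huD, hvu⟩
  choose! u hu using hpartner
  refine Set.two_mul_ncard_le_ncard_of_two_graphs hP₂ u (-u ·)
    (fun v hv => self_ne_neg.2 (hu v hv).2.2.2.2.right_ne_zero) hu fun v hv => ?_
  obtain ⟨h₁, h₂, h₃, h₄, h⟩ := hu v hv
  exact ⟨h₁, h₂, neg_mem h₃, hsymm ▸ Set.neg_mem_neg.2 h₄, h.neg_right⟩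

/-- Let `Λ ⊂ ℝ^d` be a lattice of full rank `d` and `D` a bounded symmetric convex set.
If the set `P¹` of primitive vectors of `Λ` lying in `D` has more than two elements,
then `|P¹| ≤ (1/2)|P²|`, where `P²` is the set of primitive pairs of `Λ` with both
entries in `D`. -/
theorem card_primitive_le_card_pairs (d : ℕ) (hd : 2 ≤ d)
    (Λ : Submodule ℤ (Fin d → ℝ))
    (hfull : ∃ b : Module.Basis (Fin d) ℤ Λ,
      LinearIndependent ℝ (fun k => ((b k : Λ) : Fin d → ℝ)))
    (D : Set (Fin d → ℝ)) (hD : Convex ℝ D)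
    (hbdd : Bornology.IsBounded D) (hsymm : -D = D)
    (hcard : 2 < {v | v ∈ Λ ∧ v ∈ D ∧ IsPrimitiveVec d Λ v}.ncard) :
    2 * {v | v ∈ Λ ∧ v ∈ D ∧ IsPrimitiveVec d Λ v}.ncard ≤
      {q : (Fin d → ℝ) × (Fin d → ℝ) | q.1 ∈ Λ ∧ q.1 ∈ D ∧ q.2 ∈ Λ ∧ q.2 ∈ D ∧
        IsPrimitivePair d Λ q.1 q.2}.ncard :=
  card_primitive_le_card_pairs_general d Λ D hD hsymm hcard
end
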